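/- Let α ∈ ℝ. Then for all x ∈ (0, 1), the series ∑_{k=3}^∞ b_k(α) x^k converges and 1 + (1+x)^α − (1−x)^{(1−α)/2} − (1+x)^{(1+α)/2} = ((α−1)²/4) x² + ∑_{k=3}^∞ b_k(α) x^k. -/

import Mathlib

/-- The generalized binomial coefficient `binom(γ, k) = γ(γ−1)⋯(γ−k+1)/k!`. -/
noncomputable def genBinom (γ : ℝ) (k : ℕ) : ℝ :=
  (∏ i ∈ Finset.range k, (γ - i)) / (Nat.factorial k)

lemma genBinom_zero (γ : ℝ) : genBinom γ 0 = 1 := by simp [genBinom]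

lemma genBinom_succ (γ : ℝ) (k : ℕ) :
    genBinom γ (k + 1) = genBinom γ k * (γ - k) / (k + 1) := by
  have h1 : (Nat.factorial k : ℝ) ≠ 0 := Nat.cast_ne_zero.2 k.factorial_ne_zero
  have h2 : ((k : ℝ) + 1) ≠ 0 := by positivity
  rw [genBinom, genBinom, Finset.prod_range_succ, Nat.factorial_succ,
    div_mul_eq_mul_div, div_div]
  push_cast
  rw [mul_comm ((k : ℝ) + 1)]

lemma genBinom_abs_succ (γ : ℝ) (k : ℕ) :
    |genBinom γ (k + 1)| = |genBinom γ k| * |γ - k| / (k + 1) := by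
  rw [genBinom_succ, abs_div, abs_mul]
  congr 1
  rw [abs_of_pos]; positivity

/-- the majorant for the derivative series -/
lemma summable_maj (γ : ℝ) {r : ℝ} (hr0 : 0 ≤ r) (hr1 : r < 1) :
    Summable (fun n : ℕ => (n : ℝ) * |genBinom γ n| * r ^ (n - 1)) := by
  set ρ : ℝ := (1 + r) / 2 with hρ
  have hρ1 : ρ < 1 := by rw [hρ]; linarith
  have hρ0 : (0 : ℝ) ≤ ρ := by rw [hρ]; linarith
  have h1r : (0 : ℝ) < 1 - r := by linarith
  obtain ⟨N, hN⟩ := exists_nat_ge (2 * |γ| * r / (1 - r) + 1)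
  apply summable_of_ratio_norm_eventually_le hρ1
  filter_upwards [Filter.eventually_ge_atTop N] with n hn
  have hNn : (2 * |γ| * r / (1 - r) + 1) ≤ (n : ℝ) := le_trans hN (by exact_mod_cast hn)
  have hdiv : (0 : ℝ) ≤ 2 * |γ| * r / (1 - r) := by positivity
  have hn1 : (1 : ℝ) ≤ (n : ℝ) := by linarith
  have hn1' : 1 ≤ n := by exact_mod_cast hn1
  have hnγ : 2 * |γ| * r ≤ (1 - r) * n := by
    rw [div_add' _ _ _ (ne_of_gt h1r), div_le_iff₀ h1r] at hNn
    nlinarith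
  have key : |γ - n| * r ≤ ρ * n := by
    have habs : |γ - (n : ℝ)| ≤ |γ| + n := by
      calc |γ - (n : ℝ)| = |γ + -(n : ℝ)| := by rw [sub_eq_add_neg]
        _ ≤ |γ| + |-(n : ℝ)| := abs_add_le _ _
        _ = |γ| + n := by rw [abs_neg, Nat.abs_cast]
    have h2 : (|γ| + n) * r ≤ ρ * n := by rw [hρ]; nlinarith
    nlinarith [mul_le_mul_of_nonneg_right habs hr0]
  simp only [Real.norm_eq_abs]
  have e1 : ((n : ℝ) + 1) * |genBinom γ (n + 1)| = |genBinom γ n| * |γ - n| := by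
    rw [genBinom_abs_succ]
    field_simp
  have hb : 0 ≤ |genBinom γ n| := abs_nonneg _
  have hrn : (0 : ℝ) ≤ r ^ (n - 1) := by positivity
  have main : ((n : ℝ) + 1) * |genBinom γ (n + 1)| * r ^ (n + 1 - 1)
      ≤ ρ * ((n : ℝ) * |genBinom γ n| * r ^ (n - 1)) := by
    obtain ⟨m, rfl⟩ : ∃ m, n = m + 1 := ⟨n - 1, by omega⟩
    rw [e1]
    simp only [Nat.add_sub_cancel, pow_succ]
    push_cast
    push_cast at key
    nlinarith [mul_le_mul_of_nonneg_right key
      (mul_nonneg (abs_nonneg (genBinom γ (m + 1))) (pow_nonneg hr0 m))]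
  calc |((n : ℕ) + 1 : ℕ) * |genBinom γ (n + 1)| * r ^ (n + 1 - 1)|
      = ((n : ℝ) + 1) * |genBinom γ (n + 1)| * r ^ (n + 1 - 1) := by
        rw [abs_of_nonneg (by positivity)]; push_cast; ring
    _ ≤ ρ * ((n : ℝ) * |genBinom γ n| * r ^ (n - 1)) := main
    _ ≤ ρ * |(n : ℝ) * |genBinom γ n| * r ^ (n - 1)| :=
        mul_le_mul_of_nonneg_left (le_abs_self _) hρ0

lemma summable_deriv (γ : ℝ) {y r : ℝ} (hy : |y| ≤ r) (hr1 : r < 1) :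
    Summable (fun k : ℕ => genBinom γ k * ((k : ℝ) * y ^ (k - 1))) := by
  have hr0 : 0 ≤ r := le_trans (abs_nonneg y) hy
  apply Summable.of_norm_bounded (summable_maj γ hr0 hr1)
  intro k
  rw [Real.norm_eq_abs, abs_mul, abs_mul, Nat.abs_cast, abs_pow]
  calc |genBinom γ k| * ((k : ℝ) * |y| ^ (k - 1))
      ≤ |genBinom γ k| * ((k : ℝ) * r ^ (k - 1)) := by
        apply mul_le_mul_of_nonneg_left _ (abs_nonneg _)
        exact mul_le_mul_of_nonneg_left (pow_le_pow_left₀ (abs_nonneg y) hy _) (Nat.cast_nonneg k)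
    _ = (k : ℝ) * |genBinom γ k| * r ^ (k - 1) := by ring

lemma summable_series (γ : ℝ) {y : ℝ} (hy : |y| < 1) :
    Summable (fun k : ℕ => genBinom γ k * y ^ k) := by
  set r : ℝ := (|y| + 1) / 2 with hr
  have hy0 := abs_nonneg y
  have hyr : |y| ≤ r := by rw [hr]; linarith
  have hr0 : 0 ≤ r := le_trans hy0 hyr
  have hr1 : r < 1 := by rw [hr]; linarith
  apply Summable.of_norm_bounded_eventually_nat (summable_maj γ hr0 hr1)
  filter_upwards [Filter.eventually_ge_atTop 1] with k hk
  obtain ⟨m, rfl⟩ : ∃ m, k = m + 1 := ⟨k - 1, by omega⟩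
  rw [Real.norm_eq_abs, abs_mul, abs_pow, Nat.add_sub_cancel]
  have h1 : |y| ^ (m + 1) ≤ r ^ m := by
    calc |y| ^ (m + 1) ≤ r ^ (m + 1) := pow_le_pow_left₀ hy0 hyr _
      _ = r ^ m * r := pow_succ r m
      _ ≤ r ^ m * 1 := by nlinarith [pow_nonneg hr0 m]
      _ = r ^ m := mul_one _
  calc |genBinom γ (m + 1)| * |y| ^ (m + 1)
      ≤ |genBinom γ (m + 1)| * r ^ m :=
        mul_le_mul_of_nonneg_left h1 (abs_nonneg _)
    _ ≤ ((m : ℝ) + 1) * |genBinom γ (m + 1)| * r ^ m := by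
        nlinarith [abs_nonneg (genBinom γ (m + 1)), pow_nonneg hr0 m,
          mul_nonneg (abs_nonneg (genBinom γ (m + 1))) (pow_nonneg hr0 m), (Nat.cast_nonneg m : (0:ℝ) ≤ m)]
    _ = (((m : ℕ) + 1 : ℕ) : ℝ) * |genBinom γ (m + 1)| * r ^ m := by push_cast; ring

lemma hasDerivAt_binomF (γ : ℝ) {y : ℝ} (hy : |y| < 1) :
    HasDerivAt (fun z : ℝ => ∑' k : ℕ, genBinom γ k * z ^ k)
      (∑' k : ℕ, genBinom γ k * ((k : ℝ) * y ^ (k - 1))) y := by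
  set r : ℝ := (|y| + 1) / 2 with hr
  have hy0 := abs_nonneg y
  have hyr : |y| < r := by rw [hr]; linarith
  have hr0 : 0 ≤ r := le_trans hy0 hyr.le
  have hr1 : r < 1 := by rw [hr]; linarith
  have hmem : ∀ z : ℝ, z ∈ Metric.ball (0 : ℝ) r ↔ |z| < r := by
    intro z; simp [Metric.mem_ball, Real.dist_eq]
  refine hasDerivAt_tsum_of_isPreconnected (summable_maj γ hr0 hr1) Metric.isOpen_ball
    (convex_ball (0 : ℝ) r).isPreconnected
    (fun n z _ => (hasDerivAt_pow n z).const_mul (genBinom γ n))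
    (fun n z hz => ?_) ((hmem 0).2 (by simpa using lt_of_le_of_lt hy0 hyr))
    ?_ ((hmem y).2 hyr)
  case' refine_2 =>
    apply summable_of_ne_finset_zero (s := {0})
    intro n hn
    have : n ≠ 0 := by simpa using hn
    simp [zero_pow this]
  · rw [Real.norm_eq_abs, abs_mul, abs_mul, Nat.abs_cast, abs_pow]
    have hzr : |z| ≤ r := ((hmem z).1 hz).le
    calc |genBinom γ n| * ((n : ℝ) * |z| ^ (n - 1))
        ≤ |genBinom γ n| * ((n : ℝ) * r ^ (n - 1)) := by
          apply mul_le_mul_of_nonneg_left _ (abs_nonneg _)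
          exact mul_le_mul_of_nonneg_left (pow_le_pow_left₀ (abs_nonneg z) hzr _)
            (Nat.cast_nonneg n)
      _ = (n : ℝ) * |genBinom γ n| * r ^ (n - 1) := by ring

lemma genBinom_rec (γ : ℝ) (k : ℕ) :
    ((k : ℝ) + 1) * genBinom γ (k + 1) = (γ - k) * genBinom γ k := by
  rw [genBinom_succ]
  have h2 : ((k : ℝ) + 1) ≠ 0 := by positivity
  field_simp

lemma ode_identity (γ : ℝ) {y : ℝ} (hy : |y| < 1) :
    (1 + y) * ∑' k : ℕ, genBinom γ k * ((k : ℝ) * y ^ (k - 1)) =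
      γ * ∑' k : ℕ, genBinom γ k * y ^ k := by
  have Sd : Summable (fun k : ℕ => genBinom γ k * ((k : ℝ) * y ^ (k - 1))) :=
    summable_deriv γ le_rfl hy
  have S0 := summable_series γ hy
  set A := ∑' k : ℕ, genBinom γ k * ((k : ℝ) * y ^ (k - 1)) with hA
  -- shifted derivative series
  have hfun : ∀ k : ℕ, genBinom γ (k + 1) * (((k : ℕ) + 1 : ℕ) * y ^ (k + 1 - 1)) =
      genBinom γ (k + 1) * (((k : ℝ) + 1) * y ^ k) := by
    intro k; rw [Nat.add_sub_cancel]; push_cast; ring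
  have hshift : Summable (fun k : ℕ => genBinom γ (k + 1) * (((k : ℝ) + 1) * y ^ k)) :=
    ((summable_nat_add_iff 1).2 Sd).congr hfun
  have hAeq : A = ∑' k : ℕ, genBinom γ (k + 1) * (((k : ℝ) + 1) * y ^ k) := by
    rw [hA, Summable.tsum_eq_zero_add Sd]
    simp only [Nat.cast_zero, zero_mul, mul_zero, zero_add]
    exact tsum_congr hfun
  -- y * A
  have hymul : ∀ k : ℕ, y * (genBinom γ k * ((k : ℝ) * y ^ (k - 1))) =
      genBinom γ k * ((k : ℝ) * y ^ k) := by
    intro k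
    cases k with
    | zero => simp
    | succ m => rw [Nat.add_sub_cancel, pow_succ]; push_cast; ring
  have hSy : Summable (fun k : ℕ => genBinom γ k * ((k : ℝ) * y ^ k)) :=
    (Sd.mul_left y).congr hymul
  have hyA : y * A = ∑' k : ℕ, genBinom γ k * ((k : ℝ) * y ^ k) := by
    rw [hA, ← tsum_mul_left]
    exact tsum_congr hymul
  have key : A + y * A = γ * ∑' k : ℕ, genBinom γ k * y ^ k := by
    rw [hyA, hAeq, ← Summable.tsum_add hshift hSy, ← tsum_mul_left]
    apply tsum_congr
    intro k
    have hrec := genBinom_rec γ k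
    calc genBinom γ (k + 1) * (((k : ℝ) + 1) * y ^ k) + genBinom γ k * ((k : ℝ) * y ^ k)
        = (((k : ℝ) + 1) * genBinom γ (k + 1) + (k : ℝ) * genBinom γ k) * y ^ k := by ring
      _ = ((γ - k) * genBinom γ k + (k : ℝ) * genBinom γ k) * y ^ k := by rw [hrec]
      _ = γ * (genBinom γ k * y ^ k) := by ring
  linarith [key]

lemma hasSum_genBinom (γ : ℝ) {y : ℝ} (hy : |y| < 1) :
    HasSum (fun k : ℕ => genBinom γ k * y ^ k) ((1 + y) ^ γ) := by
  obtain ⟨hy1, hy2⟩ := abs_lt.mp hy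
  set f : ℝ → ℝ := fun z => ∑' k : ℕ, genBinom γ k * z ^ k with hf
  set H : ℝ → ℝ := fun z => f z * (1 + z) ^ (-γ) with hH
  have hpos : ∀ z : ℝ, |z| < 1 → 0 < 1 + z := by
    intro z hz; have := (abs_lt.mp hz).1; linarith
  have hderiv : ∀ z : ℝ, |z| < 1 → HasDerivAt H 0 z := by
    intro z hz
    have h1z : 0 < 1 + z := hpos z hz
    have d1 := hasDerivAt_binomF γ hz
    have d2 : HasDerivAt (fun w : ℝ => (1 + w) ^ (-γ)) (-γ * (1 + z) ^ (-γ - 1)) z := by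
      have hb : HasDerivAt (fun w : ℝ => 1 + w) 1 z := (hasDerivAt_id z).const_add 1
      have := (Real.hasDerivAt_rpow_const (x := 1 + z) (p := -γ)
        (Or.inl (ne_of_gt h1z))).comp z hb
      exact this.congr_deriv (by ring)
    have dH : HasDerivAt H _ z := d1.mul d2
    convert dH using 1
    set A := ∑' k : ℕ, genBinom γ k * ((k : ℝ) * z ^ (k - 1)) with hAdef
    have hode := ode_identity γ hz
    have e : (1 + z) ^ (-γ) = (1 + z) ^ (-γ - 1) * (1 + z) := by
      rw [← Real.rpow_add_one (ne_of_gt h1z)]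
      ring_nf
    rw [e]
    have : A * ((1 + z) ^ (-γ - 1) * (1 + z)) + f z * (-γ * (1 + z) ^ (-γ - 1)) =
        (1 + z) ^ (-γ - 1) * ((1 + z) * A - γ * f z) := by ring
    rw [this, hode]
    simp [hf]
  have hmem : ∀ z ∈ Set.Icc (min y 0) (max y 0), |z| < 1 := by
    intro z hz
    obtain ⟨h1, h2⟩ := hz
    rw [abs_lt]
    constructor
    · have : (-1 : ℝ) < min y 0 := lt_min hy1 (by norm_num)
      linarith
    · have : max y 0 < 1 := max_lt hy2 (by norm_num)
      linarith
  have hc := constant_of_has_deriv_right_zero (f := H) (a := min y 0) (b := max y 0)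
    (fun z hz => (hderiv z (hmem z hz)).continuousAt.continuousWithinAt)
    (fun z hz => (hderiv z (hmem z (Set.mem_of_mem_of_subset hz Set.Ico_subset_Icc_self))).hasDerivWithinAt)
  have hyI : y ∈ Set.Icc (min y 0) (max y 0) := ⟨min_le_left _ _, le_max_left _ _⟩
  have h0I : (0 : ℝ) ∈ Set.Icc (min y 0) (max y 0) := ⟨min_le_right _ _, le_max_right _ _⟩
  have hH0 : H 0 = 1 := by
    have hf0 : f 0 = 1 := by
      show ∑' k : ℕ, genBinom γ k * (0 : ℝ) ^ k = 1
      rw [tsum_eq_single 0 (fun k hk => by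
        obtain ⟨m, rfl⟩ : ∃ m, k = m + 1 := ⟨k - 1, by omega⟩
        simp)]
      simp [genBinom_zero]
    rw [hH]
    simp only [hf0, add_zero, Real.one_rpow, one_mul]
  have hHy : H y = 1 := by
    rw [hc y hyI, ← hc 0 h0I, hH0]
  have h1y : 0 < 1 + y := hpos y hy
  have hfy : f y = (1 + y) ^ γ := by
    have hne : ((1 + y) ^ γ : ℝ) ≠ 0 := ne_of_gt (Real.rpow_pos_of_pos h1y _)
    have : f y * (1 + y) ^ (-γ) = 1 := hHy
    rw [Real.rpow_neg h1y.le] at this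
    field_simp at this
    linarith [this]
  exact hfy ▸ (summable_series γ hy).hasSum

/-- `b_k(α) = binom(α,k) − (−1)^k binom((1−α)/2, k) − binom((1+α)/2, k)`. -/
noncomputable def bCoef (α : ℝ) (k : ℕ) : ℝ :=
  genBinom α k - (-1) ^ k * genBinom ((1 - α) / 2) k - genBinom ((1 + α) / 2) k

set_option maxHeartbeats 1000000 in
/-- Identity (4.3): Taylor expansion of
`g(x) = 1 + (1+x)^α − (1−x)^{(1−α)/2} − (1+x)^{(1+α)/2}`. -/
theorem g_taylor_expansion (α : ℝ) (x : ℝ) (hx : x ∈ Set.Ioo (0 : ℝ) 1) :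
    Summable (fun k : ℕ => bCoef α (k + 3) * x ^ (k + 3)) ∧
    1 + (1 + x) ^ α - (1 - x) ^ ((1 - α) / 2) - (1 + x) ^ ((1 + α) / 2) =
      (α - 1) ^ 2 / 4 * x ^ 2 + ∑' k : ℕ, bCoef α (k + 3) * x ^ (k + 3) := by
  obtain ⟨hx0, hx1⟩ := hx
  have hxa : |x| < 1 := abs_lt.mpr ⟨by linarith, hx1⟩
  have hxna : |(-x)| < 1 := by rwa [abs_neg]
  have h1 := hasSum_genBinom α hxa
  have h3 := hasSum_genBinom ((1 + α) / 2) hxa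
  have h2' := hasSum_genBinom ((1 - α) / 2) hxna
  have h2 : HasSum (fun k : ℕ => (-1 : ℝ) ^ k * genBinom ((1 - α) / 2) k * x ^ k)
      ((1 - x) ^ ((1 - α) / 2)) := by
    have e : (1 : ℝ) + -x = 1 - x := by ring
    rw [e] at h2'
    have hfn : (fun k : ℕ => (-1 : ℝ) ^ k * genBinom ((1 - α) / 2) k * x ^ k) =
        fun k : ℕ => genBinom ((1 - α) / 2) k * (-x) ^ k := by
      funext k; rw [neg_pow]; ring
    rw [hfn]; exact h2'
  have hb : HasSum (fun k : ℕ => bCoef α k * x ^ k)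
      ((1 + x) ^ α - (1 - x) ^ ((1 - α) / 2) - (1 + x) ^ ((1 + α) / 2)) := by
    have hfn : (fun k : ℕ => bCoef α k * x ^ k) =
        fun k : ℕ => genBinom α k * x ^ k -
          (-1 : ℝ) ^ k * genBinom ((1 - α) / 2) k * x ^ k -
          genBinom ((1 + α) / 2) k * x ^ k := by
      funext k; rw [bCoef]; ring
    rw [hfn]; exact (h1.sub h2).sub h3
  have hsum := hb.summable
  have hshift : Summable (fun k : ℕ => bCoef α (k + 3) * x ^ (k + 3)) :=
    (summable_nat_add_iff 3).2 hsum
  refine ⟨hshift, ?_⟩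
  have htot := hb.tsum_eq
  have hsplit := Summable.sum_add_tsum_nat_add (f := fun k : ℕ => bCoef α k * x ^ k) 3 hsum
  have hg1 : ∀ γ : ℝ, genBinom γ 1 = γ := by
    intro γ
    rw [show (1 : ℕ) = 0 + 1 from rfl, genBinom_succ, genBinom_zero]
    norm_num
  have hg2 : ∀ γ : ℝ, genBinom γ 2 = γ * (γ - 1) / 2 := by
    intro γ
    rw [show (2 : ℕ) = 1 + 1 from rfl, genBinom_succ, hg1]
    push_cast; ring
  have hrange : ∑ i ∈ Finset.range 3, bCoef α i * x ^ i = -1 + (α - 1) ^ 2 / 4 * x ^ 2 := by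
    rw [Finset.sum_range_succ, Finset.sum_range_succ, Finset.sum_range_succ,
      Finset.sum_range_zero]
    simp only [bCoef, genBinom_zero, hg1, hg2]
    ring
  have hfin : (1 + x) ^ α - (1 - x) ^ ((1 - α) / 2) - (1 + x) ^ ((1 + α) / 2) =
      -1 + (α - 1) ^ 2 / 4 * x ^ 2 + ∑' k : ℕ, bCoef α (k + 3) * x ^ (k + 3) := by
    rw [← htot, ← hsplit, hrange]
  linarith
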